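/- arXiv:solv-int/9701015 — 3 statements merged into one kernel-verified Lean document; each statement's English description precedes it below -/
import Mathlib

section
/- The Dunkl operators d_i := ∂/∂x_i + λ Σ_{j≠i} (1 − K_{i,j})/(x_i − x_j), acting on polynomials in x_1,…,x_N (where K_{i,j} exchanges variables x_i and x_j), pairwise commute: [d_i, d_j] = 0 for all i, j. -/
open MvPolynomial Finset

/-- The operator exchanging the variables `x i` and `x j` in `ℂ[x_1,…,x_N]`. -/
noncomputable def exchange (N : ℕ) (i j : Fin N) :
    MvPolynomial (Fin N) ℂ →ₗ[ℂ] MvPolynomial (Fin N) ℂ :=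
  (rename (Equiv.swap i j)).toLinearMap

/-- `d` is the family of Dunkl operators with parameter `lam`:
`d i f = ∂f/∂x_i + lam * Σ_{j ≠ i} (f - K_{i,j} f)/(x_i - x_j)`.  The defining
identity is stated with denominators cleared (multiplying through by
`∏_{j ≠ i} (x_i - x_j)`), which characterizes `d` uniquely since
`ℂ[x_1,…,x_N]` is an integral domain. -/
def IsDunkl (N : ℕ) (lam : ℂ)
    (d : Fin N → (MvPolynomial (Fin N) ℂ →ₗ[ℂ] MvPolynomial (Fin N) ℂ)) : Prop :=
  ∀ (i : Fin N) (f : MvPolynomial (Fin N) ℂ),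
    (∏ j ∈ univ.erase i, (X i - X j)) * d i f =
      (∏ j ∈ univ.erase i, (X i - X j)) * pderiv i f +
        lam • ∑ j ∈ univ.erase i,
          (∏ k ∈ (univ.erase i).erase j, (X i - X k)) * (f - exchange N i j f)

namespace DunklAux

variable {N : ℕ} {lam : ℂ}
variable {d : Fin N → (MvPolynomial (Fin N) ℂ →ₗ[ℂ] MvPolynomial (Fin N) ℂ)}

local notation "R" => MvPolynomial (Fin N) ℂ

lemma exchange_apply (i j : Fin N) (f : R) :
    exchange N i j f = rename (Equiv.swap i j) f := rfl

lemma exchange_comm (i j : Fin N) (f : R) :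
    exchange N i j f = exchange N j i f := by
  rw [exchange_apply, exchange_apply, Equiv.swap_comm]

lemma P_ne (i : Fin N) : (∏ j ∈ univ.erase i, (X i - X j) : R) ≠ 0 := by
  rw [Finset.prod_ne_zero_iff]
  intro j hj
  rw [sub_ne_zero]
  intro h
  exact (Finset.mem_erase.1 hj).1 (X_injective h).symm

lemma QP (i : Fin N) {j : Fin N} (hj : j ∈ univ.erase i) :
    (X i - X j) * (∏ k ∈ (univ.erase i).erase j, (X i - X k) : R) =
      ∏ j ∈ univ.erase i, (X i - X j) :=
  Finset.mul_prod_erase (univ.erase i) (fun k => (X i - X k : R)) hj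

lemma d_C (hd : IsDunkl N lam d) (i : Fin N) (c : ℂ) : d i (C c) = 0 := by
  have h := hd i (C c)
  simp only [exchange_apply, rename_C, sub_self, mul_zero, Finset.sum_const_zero,
    smul_zero, add_zero, pderiv_C] at h
  exact mul_left_cancel₀ (P_ne i) (by rw [h, mul_zero])

lemma d_rename (hd : IsDunkl N lam d) (σ : Equiv.Perm (Fin N)) (i : Fin N) (f : R) :
    rename σ (d i f) = d (σ i) (rename σ f) := by
  have hinj : ∀ a ∈ univ.erase i, ∀ b ∈ univ.erase i, σ a = σ b → a = b :=
    fun a _ b _ h => σ.injective h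
  have him : (univ.erase i).image σ = univ.erase (σ i) := by
    rw [Finset.image_erase σ.injective, Finset.image_univ_equiv]
  have him2 : ∀ j : Fin N, ((univ.erase i).erase j).image σ =
      (univ.erase (σ i)).erase (σ j) := by
    intro j; rw [Finset.image_erase σ.injective, him]
  have hP : rename σ (∏ j ∈ univ.erase i, ((X i - X j : R)))
      = ∏ j ∈ univ.erase (σ i), (X (σ i) - X j) := by
    rw [map_prod, ← him, Finset.prod_image hinj]
    simp
  have hQ : ∀ j : Fin N, rename σ (∏ k ∈ (univ.erase i).erase j, ((X i - X k : R)))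
      = ∏ k ∈ (univ.erase (σ i)).erase (σ j), (X (σ i) - X k) := by
    intro j
    rw [map_prod, ← him2 j,
      Finset.prod_image (fun a _ b _ h => σ.injective h)]
    simp
  have hsw : ∀ (j : Fin N) (g : R), rename σ (rename (Equiv.swap i j) g)
      = rename (Equiv.swap (σ i) (σ j)) (rename σ g) := by
    intro j g
    rw [rename_rename, rename_rename]
    have hfun : (⇑σ ∘ ⇑(Equiv.swap i j)) = (⇑(Equiv.swap (σ i) (σ j)) ∘ ⇑σ) := by
      funext a
      simp only [Function.comp_apply, Equiv.swap_apply_apply σ i j, Equiv.Perm.mul_apply,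
        Equiv.Perm.inv_def, Equiv.symm_apply_apply]
    rw [hfun]
  have h := congrArg (⇑(rename σ : MvPolynomial (Fin N) ℂ →ₐ[ℂ] MvPolynomial (Fin N) ℂ))
    (hd i f)
  simp only [map_mul, map_add, map_smul, map_sum, map_sub] at h
  rw [hP, (pderiv_rename σ.injective i f : pderiv (σ i) (rename σ f) = _).symm] at h
  have hsum : ∑ j ∈ univ.erase i,
        rename σ (∏ k ∈ (univ.erase i).erase j, (X i - X k : R)) *
          (rename σ f - rename σ (exchange N i j f))
      = ∑ j ∈ univ.erase (σ i), (∏ k ∈ (univ.erase (σ i)).erase j, (X (σ i) - X k)) *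
          (rename σ f - exchange N (σ i) j (rename σ f)) := by
    rw [← him, Finset.sum_image hinj]
    refine Finset.sum_congr rfl fun j hj => ?_
    rw [hQ j, exchange_apply, exchange_apply, hsw, him]
  rw [hsum] at h
  exact mul_left_cancel₀ (P_ne (σ i)) (h.trans (hd (σ i) (rename σ f)).symm)

lemma d_mulX (hd : IsDunkl N lam d) (i k : Fin N) (f : R) :
    d i (X k * f) = X k * d i f +
      (if k = i then f + lam • ∑ l ∈ univ.erase i, exchange N i l f
       else -(lam • exchange N i k f)) := by
  have h0 := hd i f
  have h1 := hd i (X k * f)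
  apply mul_left_cancel₀ (P_ne i)
  rw [h1]
  simp only [smul_eq_C_mul] at h0 ⊢
  by_cases hk : k = i
  · subst hk
    simp only [eq_self_iff_true, if_true]
    have hder : pderiv k (X k * f) = f + X k * pderiv k f := by
      rw [pderiv_mul, pderiv_X_self, one_mul]
    have hterm : ∀ j ∈ univ.erase k,
        (∏ m ∈ (univ.erase k).erase j, (X k - X m : R)) * (X k * f - exchange N k j (X k * f))
          = X k * ((∏ m ∈ (univ.erase k).erase j, (X k - X m)) * (f - exchange N k j f))
            + (∏ m ∈ univ.erase k, (X k - X m)) * exchange N k j f := by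
      intro j hj
      have hx : exchange N k j (X k * f) = X j * exchange N k j f := by
        rw [exchange_apply, map_mul, rename_X, Equiv.swap_apply_left, exchange_apply]
      rw [hx, ← QP k hj]
      ring
    rw [hder, Finset.sum_congr rfl hterm, Finset.sum_add_distrib, ← Finset.mul_sum,
      ← Finset.mul_sum]
    linear_combination (-(X k : R)) * h0
  · simp only [if_neg hk]
    have hk' : k ∈ univ.erase i := Finset.mem_erase.2 ⟨hk, Finset.mem_univ k⟩
    have hder : pderiv i (X k * f) = X k * pderiv i f := by
      rw [pderiv_mul, pderiv_X_of_ne hk, zero_mul, zero_add]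
    have hFk : (∏ m ∈ (univ.erase i).erase k, (X i - X m : R)) *
          (X k * f - exchange N i k (X k * f))
        = X k * ((∏ m ∈ (univ.erase i).erase k, (X i - X m)) * (f - exchange N i k f))
          - (∏ m ∈ univ.erase i, (X i - X m)) * exchange N i k f := by
      have hx : exchange N i k (X k * f) = X i * exchange N i k f := by
        rw [exchange_apply, map_mul, rename_X, Equiv.swap_apply_right, exchange_apply]
      rw [hx, ← QP i hk']
      ring
    have hterm : ∀ j ∈ (univ.erase i).erase k,
        (∏ m ∈ (univ.erase i).erase j, (X i - X m : R)) * (X k * f - exchange N i j (X k * f))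
          = X k * ((∏ m ∈ (univ.erase i).erase j, (X i - X m)) * (f - exchange N i j f)) := by
      intro j hj
      have hjk : k ≠ j := fun h => (Finset.mem_erase.1 hj).1 h.symm
      have hki : k ≠ i := hk
      have hx : exchange N i j (X k * f) = X k * exchange N i j f := by
        rw [exchange_apply, map_mul, rename_X, Equiv.swap_apply_of_ne_of_ne hki hjk,
          exchange_apply]
      rw [hx]
      ring
    rw [hder, ← Finset.add_sum_erase _ _ hk', hFk, Finset.sum_congr rfl hterm,
      ← Finset.mul_sum]
    rw [← Finset.add_sum_erase _ _ hk'] at h0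
    linear_combination (-(X k : R)) * h0

noncomputable def brak (lam : ℂ) {N : ℕ} (a n : Fin N) (g : MvPolynomial (Fin N) ℂ) :
    MvPolynomial (Fin N) ℂ :=
  if n = a then g + lam • ∑ l ∈ univ.erase a, exchange N a l g
  else -(lam • exchange N a n g)

lemma d_mulX' (hd : IsDunkl N lam d) (i k : Fin N) (f : R) :
    d i (X k * f) = X k * d i f + brak lam i k f := by
  rw [d_mulX hd i k f]; rfl

lemma d_exchange (hd : IsDunkl N lam d) (a b m : Fin N) (f : R) :
    d m (exchange N a b f) = exchange N a b (d (Equiv.swap a b m) f) := by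
  have h := d_rename hd (Equiv.swap a b) (Equiv.swap a b m) f
  rw [Equiv.swap_apply_self] at h
  rw [exchange_apply, ← h, exchange_apply]

lemma key (hd : IsDunkl N lam d) {i j : Fin N} (hij : i ≠ j) (n : Fin N) (hn : n ≠ j)
    (p : R) :
    brak lam i n (d j p) + d i (brak lam j n p)
      = brak lam j n (d i p) + d j (brak lam i n p) := by
  by_cases hni : n = i
  · subst hni
    have hnj : ¬ (n = j) := hn
    simp only [brak, eq_self_iff_true, if_true, if_neg hnj]
    have h1 : d n (exchange N j n p) = exchange N j n (d j p) := by
      rw [d_exchange hd j n n p, Equiv.swap_apply_right]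
    have h2 : ∑ l ∈ univ.erase n, d j (exchange N n l p)
        = exchange N n j (d n p) + ∑ l ∈ (univ.erase n).erase j,
            exchange N n l (d j p) := by
      have hjel : j ∈ univ.erase n :=
        Finset.mem_erase.2 ⟨fun h => hn h.symm, Finset.mem_univ j⟩
      rw [← Finset.add_sum_erase _ _ hjel]
      congr 1
      · rw [d_exchange hd n j j p, Equiv.swap_apply_right]
      · refine Finset.sum_congr rfl fun l hl => ?_
        have hl1 : l ≠ j := (Finset.mem_erase.1 hl).1
        have hl2 : l ≠ n := (Finset.mem_erase.1 (Finset.mem_erase.1 hl).2).1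
        rw [d_exchange hd n l j p,
          Equiv.swap_apply_of_ne_of_ne (fun h => hn h.symm) (Ne.symm hl1)]
    have h3 : ∑ l ∈ univ.erase n, exchange N n l (d j p)
        = exchange N n j (d j p) + ∑ l ∈ (univ.erase n).erase j,
            exchange N n l (d j p) := by
      have hjel : j ∈ univ.erase n :=
        Finset.mem_erase.2 ⟨fun h => hn h.symm, Finset.mem_univ j⟩
      rw [← Finset.add_sum_erase _ _ hjel]
    have h4 : exchange N j n (d j p) = exchange N n j (d j p) := exchange_comm j n _
    have h5 : exchange N j n (d n p) = exchange N n j (d n p) := exchange_comm j n _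
    rw [map_neg, map_smul, h1, h4, map_add, map_smul, map_sum, h2, h3, h5]
    simp only [smul_add]
    abel
  · simp only [brak, if_neg hni, if_neg hn]
    have h1 : d i (exchange N j n p) = exchange N j n (d i p) := by
      rw [d_exchange hd j n i p, Equiv.swap_apply_of_ne_of_ne hij (Ne.symm hni)]
    have h2 : d j (exchange N i n p) = exchange N i n (d j p) := by
      rw [d_exchange hd i n j p,
        Equiv.swap_apply_of_ne_of_ne (Ne.symm hij) (fun h => hn h.symm)]
    rw [map_neg, map_smul, h1, map_neg, map_smul, h2]
    abel

lemma key' (hd : IsDunkl N lam d) {i j : Fin N} (hij : i ≠ j) (n : Fin N) (p : R) :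
    brak lam i n (d j p) + d i (brak lam j n p)
      = brak lam j n (d i p) + d j (brak lam i n p) := by
  by_cases hn : n = j
  · subst hn
    exact (key hd hij.symm n hij.symm p).symm
  · exact key hd hij n hn p

end DunklAux

/-- The Dunkl operators pairwise commute: `[d_i, d_j] = 0`. -/
theorem dunkl_commute (N : ℕ) (lam : ℂ)
    (d : Fin N → (MvPolynomial (Fin N) ℂ →ₗ[ℂ] MvPolynomial (Fin N) ℂ))
    (hd : IsDunkl N lam d) (i j : Fin N) (f : MvPolynomial (Fin N) ℂ) :
    d i (d j f) = d j (d i f) := by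
  rcases eq_or_ne i j with rfl | hij
  · rfl
  induction f using MvPolynomial.induction_on with
  | C a => rw [DunklAux.d_C hd, map_zero, DunklAux.d_C hd, map_zero]
  | add p q hp hq => rw [map_add, map_add, map_add, map_add, hp, hq]
  | mul_X p n hp =>
    rw [mul_comm p (X n), DunklAux.d_mulX' hd j n p, map_add,
      DunklAux.d_mulX' hd i n (d j p), DunklAux.d_mulX' hd i n p, map_add,
      DunklAux.d_mulX' hd j n (d i p), hp, add_assoc, add_assoc,
      DunklAux.key' hd hij n p]
end

section
/- If σ ∈ S^m (the set of minimal-length coset representatives for a partition m), then for all 1 ≤ i ≤ N: σ(i) = #{j ≤ i : m_{σ(j)} ≥ m_{σ(i)}} + #{j > i : m_{σ(j)} > m_{σ(i)}}. -/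
open Finset

/-- `σ ∈ S^m`: for `i < j` with `m_{σ(i)} = m_{σ(j)}` one has `σ(i) < σ(j)`. -/
def MemSm (N : ℕ) (m : Fin N → ℕ) (σ : Equiv.Perm (Fin N)) : Prop :=
  ∀ i j : Fin N, i < j → m (σ i) = m (σ j) → σ i < σ j

/-- For `σ ∈ S^m`, the value `σ(i)` (which is `(σ i : ℕ) + 1` in the paper's `1`-based
convention) equals `#{j ≤ i : m_{σ(j)} ≥ m_{σ(i)}} + #{j > i : m_{σ(j)} > m_{σ(i)}}`. -/
theorem Sm_position_formula (N : ℕ) (m : Fin N → ℕ) (hm : Antitone m)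
    (σ : Equiv.Perm (Fin N)) (hσ : MemSm N m σ) (i : Fin N) :
    (σ i : ℕ) + 1 =
      (univ.filter (fun j : Fin N => j ≤ i ∧ m (σ i) ≤ m (σ j))).card +
      (univ.filter (fun j : Fin N => i < j ∧ m (σ i) < m (σ j))).card := by
  have key : ∀ j : Fin N, σ j ≤ σ i ↔
      (j ≤ i ∧ m (σ i) ≤ m (σ j)) ∨ (i < j ∧ m (σ i) < m (σ j)) := by
    intro j
    constructor
    · intro h
      have hmle : m (σ i) ≤ m (σ j) := hm h
      rcases le_or_gt j i with hji | hij
      · exact Or.inl ⟨hji, hmle⟩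
      · refine Or.inr ⟨hij, lt_of_le_of_ne hmle ?_⟩
        intro heq
        exact absurd h (not_le.mpr (hσ i j hij heq))
    · rintro (⟨hji, hmle⟩ | ⟨hij, hmlt⟩)
      · rcases lt_or_eq_of_le hji with hji | rfl
        · rcases lt_or_eq_of_le hmle with hmlt | heq
          · by_contra h
            exact absurd (hm (le_of_not_ge h)) (not_le.mpr hmlt)
          · exact le_of_lt (hσ j i hji heq.symm)
        · exact le_refl _
      · by_contra h
        exact absurd (hm (le_of_not_ge h)) (not_le.mpr hmlt)
  have h1 : (univ.filter (fun j : Fin N => σ j ≤ σ i)).card = (σ i : ℕ) + 1 := by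
    have : (univ.filter (fun j : Fin N => σ j ≤ σ i)).card
        = (univ.filter (fun k : Fin N => k ≤ σ i)).card := by
      apply Finset.card_bij (fun j _ => σ j)
      · intro a ha; simp at ha ⊢; exact ha
      · intro a _ b _ hab; exact σ.injective hab
      · intro b hb; exact ⟨σ.symm b, by simpa using hb, by simp⟩
    rw [this]
    have : (univ.filter (fun k : Fin N => k ≤ σ i)) = Finset.Iic (σ i) := by
      ext k; simp
    rw [this, Fin.card_Iic]
  have h2 : (univ.filter (fun j : Fin N => σ j ≤ σ i))
      = (univ.filter (fun j : Fin N => j ≤ i ∧ m (σ i) ≤ m (σ j))) ∪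
        (univ.filter (fun j : Fin N => i < j ∧ m (σ i) < m (σ j))) := by
    rw [← Finset.filter_or]
    exact Finset.filter_congr (fun j _ => by rw [key j])
  have hdisj : Disjoint (univ.filter (fun j : Fin N => j ≤ i ∧ m (σ i) ≤ m (σ j)))
      (univ.filter (fun j : Fin N => i < j ∧ m (σ i) < m (σ j))) := by
    rw [Finset.disjoint_left]
    intro a ha hb
    simp at ha hb
    exact absurd hb.1 (not_lt.mpr ha.1)
  rw [← h1, h2, Finset.card_union_of_disjoint hdisj]
end

section
/- The creation operators pairwise commute: [A_i^†, A_j^†] = 0, and likewise the annihilation operators: [\bar{A}_i, \bar{A}_j] = 0, as operators on ℂ[x_1,…,x_N]. -/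
open MvPolynomial Finset

/-- The creation operator `A_i^† = −h d_i + ω x_i`. -/
noncomputable def creation (N : ℕ) (h ω : ℝ)
    (d : Fin N → (MvPolynomial (Fin N) ℂ →ₗ[ℂ] MvPolynomial (Fin N) ℂ)) (i : Fin N) :
    MvPolynomial (Fin N) ℂ →ₗ[ℂ] MvPolynomial (Fin N) ℂ :=
  (-(h : ℂ)) • d i + (ω : ℂ) • LinearMap.mulLeft ℂ (X i)

/-- The (normalized) annihilation operator `\bar A_i = (h d_i + ω x_i)/(2hω)`. -/
noncomputable def annihilation (N : ℕ) (h ω : ℝ)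
    (d : Fin N → (MvPolynomial (Fin N) ℂ →ₗ[ℂ] MvPolynomial (Fin N) ℂ)) (i : Fin N) :
    MvPolynomial (Fin N) ℂ →ₗ[ℂ] MvPolynomial (Fin N) ℂ :=
  ((2 * h * ω : ℝ) : ℂ)⁻¹ • ((h : ℂ) • d i + (ω : ℂ) • LinearMap.mulLeft ℂ (X i))

namespace DunklAux

variable {N : ℕ} {lam : ℂ}
  {d : Fin N → (MvPolynomial (Fin N) ℂ →ₗ[ℂ] MvPolynomial (Fin N) ℂ)}

/-- The cleared denominator `∏_{j ≠ i} (x_i - x_j)`. -/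
noncomputable def Pp (N : ℕ) (i : Fin N) : MvPolynomial (Fin N) ℂ :=
  ∏ j ∈ univ.erase i, (X i - X j)

/-- The cleared denominator with the factor `x_i - x_j` removed. -/
noncomputable def Qq (N : ℕ) (i j : Fin N) : MvPolynomial (Fin N) ℂ :=
  ∏ k ∈ (univ.erase i).erase j, (X i - X k)

lemma Pp_ne (i : Fin N) : Pp N i ≠ 0 := by
  refine Finset.prod_ne_zero_iff.mpr fun j hj => sub_ne_zero.mpr fun hXX => ?_
  exact (Finset.mem_erase.mp hj).1 (X_injective hXX).symm

lemma Qq_mul {i j : Fin N} (h : j ∈ univ.erase i) :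
    (X i - X j) * Qq N i j = Pp N i := by
  simp only [Pp, Qq]
  exact Finset.mul_prod_erase (univ.erase i) (fun k => X i - X k) h

lemma cancel {i : Fin N} {p q : MvPolynomial (Fin N) ℂ}
    (h : Pp N i * p = Pp N i * q) : p = q :=
  mul_left_cancel₀ (Pp_ne i) h

lemma hd2 (hd : IsDunkl N lam d) (i : Fin N) (f : MvPolynomial (Fin N) ℂ) :
    Pp N i * d i f = Pp N i * pderiv i f +
      C lam * ∑ j ∈ univ.erase i,
        Qq N i j * (f - rename (Equiv.swap i j) f) := by
  have h := hd i f
  rw [smul_eq_C_mul] at h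
  exact h

lemma dunkl_one (hd : IsDunkl N lam d) (i : Fin N) : d i 1 = 0 := by
  have h := hd2 hd i 1
  simp only [pderiv_one, mul_zero, map_one, sub_self, Finset.sum_const_zero, add_zero,
    zero_add] at h
  rcases mul_eq_zero.mp h with h' | h'
  · exact absurd h' (Pp_ne i)
  · exact h'

lemma d_C_mul (i : Fin N) (a : ℂ) (g : MvPolynomial (Fin N) ℂ) :
    d i (C a * g) = C a * d i g := by
  rw [← smul_eq_C_mul, ← smul_eq_C_mul, map_smul]

lemma dX_ne (hd : IsDunkl N lam d) {i k : Fin N} (hk : k ≠ i) (f : MvPolynomial (Fin N) ℂ) :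
    d i (X k * f) = X k * d i f - C lam * rename (Equiv.swap i k) f := by
  have hk' : k ∈ univ.erase i := Finset.mem_erase.mpr ⟨hk, Finset.mem_univ k⟩
  have h1 := hd2 hd i (X k * f)
  have h2 := hd2 hd i f
  have hp : (pderiv i) (X k * f) = X k * pderiv i f := by
    rw [pderiv_mul, pderiv_X_of_ne hk, zero_mul, zero_add]
  rw [hp] at h1
  have hQ := Qq_mul (N := N) hk'
  have hsum : ∑ j ∈ univ.erase i, Qq N i j * ((X k * f) - rename (Equiv.swap i j) (X k * f))
      = X k * ∑ j ∈ univ.erase i, Qq N i j * (f - rename (Equiv.swap i j) f)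
        - Pp N i * rename (Equiv.swap i k) f := by
    rw [Finset.mul_sum, ← Finset.add_sum_erase _ _ hk', ← Finset.add_sum_erase _ _ hk']
    have hterm : ∀ j ∈ (univ.erase i).erase k,
        Qq N i j * ((X k * f) - rename (Equiv.swap i j) (X k * f))
          = X k * (Qq N i j * (f - rename (Equiv.swap i j) f)) := by
      intro j hj
      have hjk : k ≠ j := fun hh => (Finset.mem_erase.mp hj).1 hh.symm
      rw [map_mul, rename_X, Equiv.swap_apply_of_ne_of_ne hk hjk]
      ring
    rw [Finset.sum_congr rfl hterm]
    rw [map_mul, rename_X, Equiv.swap_apply_right]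
    linear_combination (-(rename (Equiv.swap i k) f)) * hQ
  apply cancel (i := i)
  rw [hsum] at h1
  linear_combination h1 - X k * h2

lemma dX_self (hd : IsDunkl N lam d) (i : Fin N) (f : MvPolynomial (Fin N) ℂ) :
    d i (X i * f) = X i * d i f + f +
      C lam * ∑ j ∈ univ.erase i, rename (Equiv.swap i j) f := by
  have h1 := hd2 hd i (X i * f)
  have h2 := hd2 hd i f
  have hp : (pderiv i) (X i * f) = f + X i * pderiv i f := by
    rw [pderiv_mul, pderiv_X_self, one_mul]
  rw [hp] at h1
  have hsum : ∑ j ∈ univ.erase i, Qq N i j * ((X i * f) - rename (Equiv.swap i j) (X i * f))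
      = X i * ∑ j ∈ univ.erase i, Qq N i j * (f - rename (Equiv.swap i j) f)
        + Pp N i * ∑ j ∈ univ.erase i, rename (Equiv.swap i j) f := by
    rw [Finset.mul_sum, Finset.mul_sum, ← Finset.sum_add_distrib]
    refine Finset.sum_congr rfl fun j hj => ?_
    have hQ := Qq_mul (N := N) hj
    rw [map_mul, rename_X, Equiv.swap_apply_left]
    linear_combination (rename (Equiv.swap i j) f) * hQ
  apply cancel (i := i)
  rw [hsum] at h1
  linear_combination h1 - X i * h2

lemma dunkl_equiv (hd : IsDunkl N lam d) (a b c : Fin N) (f : MvPolynomial (Fin N) ℂ) :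
    rename (Equiv.swap a b) (d c f)
      = d (Equiv.swap a b c) (rename (Equiv.swap a b) f) := by
  set e := Equiv.swap a b with he
  have hinj : Function.Injective e := e.injective
  have hswapswap : ∀ x : Fin N, e (e x) = x := fun x => Equiv.swap_apply_self a b x
  have h1 := congrArg (rename (R := ℂ) e) (hd2 hd c f)
  have hP : rename e (Pp N c) = Pp N (e c) := by
    rw [Pp, Pp, map_prod]
    refine Finset.prod_nbij' (⇑e) (⇑e) ?_ ?_ ?_ ?_ ?_
    · intro x hx
      exact Finset.mem_erase.mpr ⟨hinj.ne (Finset.mem_erase.mp hx).1, Finset.mem_univ _⟩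
    · intro x hx
      refine Finset.mem_erase.mpr ⟨fun hh => (Finset.mem_erase.mp hx).1 ?_, Finset.mem_univ _⟩
      rw [← hswapswap x, hh]
    · intro x _; exact hswapswap x
    · intro x _; exact hswapswap x
    · intro x _
      rw [map_sub, rename_X, rename_X]
  have hQ : ∀ j : Fin N, rename e (Qq N c j) = Qq N (e c) (e j) := by
    intro j
    rw [Qq, Qq, map_prod]
    refine Finset.prod_nbij' (⇑e) (⇑e) ?_ ?_ ?_ ?_ ?_
    · intro x hx
      have hxj : x ≠ j := (Finset.mem_erase.mp hx).1
      have hxc : x ≠ c := (Finset.mem_erase.mp (Finset.mem_erase.mp hx).2).1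
      exact Finset.mem_erase.mpr ⟨hinj.ne hxj,
        Finset.mem_erase.mpr ⟨hinj.ne hxc, Finset.mem_univ _⟩⟩
    · intro x hx
      have hxj : x ≠ e j := (Finset.mem_erase.mp hx).1
      have hxc : x ≠ e c := (Finset.mem_erase.mp (Finset.mem_erase.mp hx).2).1
      refine Finset.mem_erase.mpr ⟨fun hh => hxj ?_,
        Finset.mem_erase.mpr ⟨fun hh => hxc ?_, Finset.mem_univ _⟩⟩
      · rw [← hswapswap x, hh]
      · rw [← hswapswap x, hh]
    · intro x _; exact hswapswap x
    · intro x _; exact hswapswap x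
    · intro x _
      rw [map_sub, rename_X, rename_X]
  have hpd : rename e ((pderiv c) f) = (pderiv (e c)) (rename e f) :=
    (pderiv_rename hinj c f).symm
  have hss : ∀ j : Fin N, rename e (rename (Equiv.swap c j) f)
      = rename (Equiv.swap (e c) (e j)) (rename e f) := by
    intro j
    have hfun : ⇑e ∘ ⇑(Equiv.swap c j) = ⇑(Equiv.swap (e c) (e j)) ∘ ⇑e := by
      funext x
      rw [Equiv.swap_apply_apply]
      simp
    rw [rename_rename, rename_rename, hfun]
  have hS : rename e (∑ j ∈ univ.erase c, Qq N c j * (f - rename (Equiv.swap c j) f))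
      = ∑ j ∈ univ.erase (e c),
          Qq N (e c) j * (rename e f - rename (Equiv.swap (e c) j) (rename e f)) := by
    rw [map_sum]
    refine Finset.sum_nbij' (⇑e) (⇑e) ?_ ?_ ?_ ?_ ?_
    · intro x hx
      exact Finset.mem_erase.mpr ⟨hinj.ne (Finset.mem_erase.mp hx).1, Finset.mem_univ _⟩
    · intro x hx
      refine Finset.mem_erase.mpr ⟨fun hh => (Finset.mem_erase.mp hx).1 ?_, Finset.mem_univ _⟩
      rw [← hswapswap x, hh]
    · intro x _; exact hswapswap x
    · intro x _; exact hswapswap x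
    · intro x _
      rw [map_mul, map_sub, hQ, hss]
  rw [map_mul, map_add, map_mul, map_mul, rename_C, hP, hpd, hS] at h1
  exact cancel (h1.trans (hd2 hd (e c) (rename e f)).symm)

lemma step_ne (hd : IsDunkl N lam d) {i j k : Fin N} (hij : i ≠ j) (hki : k ≠ i)
    (hkj : k ≠ j) (f : MvPolynomial (Fin N) ℂ)
    (hf : d i (d j f) = d j (d i f)) :
    d i (d j (X k * f)) = d j (d i (X k * f)) := by
  have e1 : rename (Equiv.swap i k) (d j f) = d j (rename (Equiv.swap i k) f) := by
    have h := dunkl_equiv hd i k j f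
    rwa [Equiv.swap_apply_of_ne_of_ne hij.symm hkj.symm] at h
  have e2 : rename (Equiv.swap j k) (d i f) = d i (rename (Equiv.swap j k) f) := by
    have h := dunkl_equiv hd j k i f
    rwa [Equiv.swap_apply_of_ne_of_ne hij hki.symm] at h
  rw [dX_ne hd hkj f, map_sub, d_C_mul, dX_ne hd hki (d j f),
      dX_ne hd hki f, map_sub, d_C_mul, dX_ne hd hkj (d i f), e1, ← e2, hf]
  ring

lemma step_eq (hd : IsDunkl N lam d) {i j : Fin N} (hij : i ≠ j)
    (f : MvPolynomial (Fin N) ℂ) (hf : d i (d j f) = d j (d i f)) :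
    d i (d j (X j * f)) = d j (d i (X j * f)) := by
  have hmemi : i ∈ univ.erase j := Finset.mem_erase.mpr ⟨hij, Finset.mem_univ i⟩
  have eA : rename (Equiv.swap i j) (d j f) = d i (rename (Equiv.swap i j) f) := by
    have h := dunkl_equiv hd i j j f
    rwa [Equiv.swap_apply_right] at h
  have eB : rename (Equiv.swap j i) (d i f) = d j (rename (Equiv.swap j i) f) := by
    have h := dunkl_equiv hd j i i f
    rwa [Equiv.swap_apply_right] at h
  have hcong : ∑ m ∈ (univ.erase j).erase i, rename (Equiv.swap j m) (d i f)
      = ∑ m ∈ (univ.erase j).erase i, d i (rename (Equiv.swap j m) f) := by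
    refine Finset.sum_congr rfl fun m hm => ?_
    have hmi : m ≠ i := (Finset.mem_erase.mp hm).1
    have h := dunkl_equiv hd j m i f
    rwa [Equiv.swap_apply_of_ne_of_ne hij hmi.symm] at h
  rw [dX_self hd j f, map_add, map_add, d_C_mul, map_sum,
      dX_ne hd hij.symm (d j f), eA,
      dX_ne hd hij.symm f, map_sub, d_C_mul, dX_self hd j (d i f),
      ← Finset.add_sum_erase _ (fun m => d i (rename (Equiv.swap j m) f)) hmemi,
      ← Finset.add_sum_erase _ (fun m => rename (Equiv.swap j m) (d i f)) hmemi,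
      hcong, eB, Equiv.swap_comm j i, hf]
  ring

lemma dunkl_comm (hd : IsDunkl N lam d) (i j : Fin N) (f : MvPolynomial (Fin N) ℂ) :
    d i (d j f) = d j (d i f) := by
  rcases eq_or_ne i j with rfl | hij
  · rfl
  induction f using MvPolynomial.induction_on with
  | C a =>
    have hone : ∀ c : Fin N, d c (C a : MvPolynomial (Fin N) ℂ) = 0 := by
      intro c
      have hCa : (C a : MvPolynomial (Fin N) ℂ) = a • 1 := by
        rw [smul_eq_C_mul, mul_one]
      rw [hCa, map_smul, dunkl_one hd, smul_zero]
    rw [hone j, hone i, map_zero, map_zero]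
  | add p q hp hq =>
    rw [map_add, map_add, map_add, map_add, hp, hq]
  | mul_X p k hp =>
    rw [mul_comm p (X k)]
    rcases eq_or_ne k j with rfl | hkj
    · exact step_eq hd hij p hp
    rcases eq_or_ne k i with rfl | hki
    · exact (step_eq hd hij.symm p hp.symm).symm
    · exact step_ne hd hij hki hkj p hp

lemma cross (hd : IsDunkl N lam d) (i j : Fin N) (f : MvPolynomial (Fin N) ℂ) :
    d i (X j * f) + X i * d j f = d j (X i * f) + X j * d i f := by
  rcases eq_or_ne i j with rfl | hij
  · rfl
  rw [dX_ne hd hij.symm f, dX_ne hd hij f, Equiv.swap_comm j i]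
  ring

end DunklAux

open DunklAux in
/-- The creation operators pairwise commute, and so do the annihilation operators:
`[A_i^†, A_j^†] = 0` and `[\bar A_i, \bar A_j] = 0`. -/
theorem creation_annihilation_commute (N : ℕ) (h ω : ℝ) (hh : 0 < h) (hω : 0 < ω)
    (lam : ℂ) (d : Fin N → (MvPolynomial (Fin N) ℂ →ₗ[ℂ] MvPolynomial (Fin N) ℂ))
    (hd : IsDunkl N lam d) (i j : Fin N) :
    creation N h ω d i ∘ₗ creation N h ω d j
      = creation N h ω d j ∘ₗ creation N h ω d i ∧
    annihilation N h ω d i ∘ₗ annihilation N h ω d j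
      = annihilation N h ω d j ∘ₗ annihilation N h ω d i := by
  have hcomm := dunkl_comm hd i j
  have hcross := cross hd i j
  constructor
  · refine LinearMap.ext fun f => ?_
    simp only [creation, LinearMap.comp_apply, LinearMap.add_apply, LinearMap.smul_apply,
      LinearMap.mulLeft_apply, smul_eq_C_mul, map_add, d_C_mul]
    linear_combination (C (-(h : ℂ)) * C (-(h : ℂ))) * hcomm f
      + (C (-(h : ℂ)) * C (ω : ℂ)) * hcross f
  · refine LinearMap.ext fun f => ?_
    simp only [annihilation, LinearMap.comp_apply, LinearMap.add_apply, LinearMap.smul_apply,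
      LinearMap.mulLeft_apply, smul_eq_C_mul, map_add, d_C_mul]
    linear_combination (C (((2 * h * ω : ℝ) : ℂ))⁻¹ * C (((2 * h * ω : ℝ) : ℂ))⁻¹
        * C (h : ℂ) * C (h : ℂ)) * hcomm f
      + (C (((2 * h * ω : ℝ) : ℂ))⁻¹ * C (((2 * h * ω : ℝ) : ℂ))⁻¹
        * C (h : ℂ) * C (ω : ℂ)) * hcross f
end
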